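/- Let X = {0, α^{i_1}, ..., α^{i_7}} be a 3-dimensional F_2-subspace of F_{2^n} with difference set Δ(X) = { i_r - i_s mod (2^n - 1) : r ≠ s }. If |Δ(X)| = 42, then the 7·(2^n - 1) two-dimensional subspaces contained in the 2^n - 1 cyclic shifts α^j·X are pairwise distinct. -/

import Mathlib

/-- Let `X` be a 3-dimensional `F_2`-subspace of `F_{2^n}` whose difference set
`Δ(X) = { i_r - i_s mod (2^n - 1) : r ≠ s }` (equivalently, the set of ratios
`x/y` of distinct nonzero elements of `X`) has size 42. Then the `7·(2^n - 1)`
two-dimensional subspaces contained in the `2^n - 1` cyclic shifts `α^j·X` are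
pairwise distinct: no 2-dimensional subspace lies in two different shifts. -/
theorem complete_subspace_shifts_have_distinct_planes
    (n : ℕ) (hn : 0 < n)
    (F : Type*) [Field F] [Fintype F] (hcard : Fintype.card F = 2 ^ n)
    [Algebra (ZMod 2) F]
    (α : Fˣ) (hα : orderOf α = 2 ^ n - 1)
    (X : Submodule (ZMod 2) F) (hX : Module.finrank (ZMod 2) X = 3)
    (hΔ : { z : F | ∃ x ∈ X, ∃ y ∈ X, x ≠ 0 ∧ y ≠ 0 ∧ x ≠ y ∧ z = x / y }.ncard = 42) :
    ∀ j₁ ≤ 2 ^ n - 2, ∀ j₂ ≤ 2 ^ n - 2,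
      ∀ W : Submodule (ZMod 2) F, Module.finrank (ZMod 2) W = 2 →
        (W : Set F) ⊆ (fun x : F => (α : F) ^ j₁ * x) '' (X : Set F) →
        (W : Set F) ⊆ (fun x : F => (α : F) ^ j₂ * x) '' (X : Set F) →
        j₁ = j₂ := by
  classical
  -- card of X is 8
  have hcardX : Fintype.card X = 8 := by
    rw [Module.card_eq_pow_finrank (K := ZMod 2) (V := X), hX, ZMod.card]; norm_num
  -- the finset of nonzero elements of X
  set s : Set F := (X : Set F) \ {0} with hs
  have hsfin : s.Finite := Set.toFinite s
  set t : Finset F := hsfin.toFinset with ht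
  have htcard : t.card = 7 := by
    have h1 : Set.ncard (X : Set F) = 8 := by
      rw [← Nat.card_coe_set_eq, Nat.card_eq_fintype_card]
      exact hcardX
    have h2 : s.ncard = 7 := by
      rw [hs, Set.ncard_diff_singleton_of_mem (Submodule.zero_mem X), h1]
    rw [← h2, Set.ncard_eq_toFinset_card s hsfin]
  -- the Δ set is the image of the offDiag
  have hSet : { z : F | ∃ x ∈ X, ∃ y ∈ X, x ≠ 0 ∧ y ≠ 0 ∧ x ≠ y ∧ z = x / y }
      = ↑(t.offDiag.image (fun p : F × F => p.1 / p.2)) := by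
    ext z
    simp only [Set.mem_setOf_eq, Finset.coe_image, Set.mem_image, Finset.mem_coe,
      Finset.mem_offDiag, ht, Set.Finite.mem_toFinset, hs, Set.mem_diff,
      Set.mem_singleton_iff, SetLike.mem_coe]
    constructor
    · rintro ⟨x, hx, y, hy, hx0, hy0, hxy, rfl⟩
      exact ⟨(x, y), ⟨⟨hx, hx0⟩, ⟨hy, hy0⟩, hxy⟩, rfl⟩
    · rintro ⟨⟨x, y⟩, ⟨⟨hx, hx0⟩, ⟨hy, hy0⟩, hxy⟩, rfl⟩
      exact ⟨x, hx, y, hy, hx0, hy0, hxy, rfl⟩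
  have hcardimg : (t.offDiag.image (fun p : F × F => p.1 / p.2)).card = 42 := by
    rw [hSet, Set.ncard_coe_finset] at hΔ
    exact hΔ
  have hinj : Set.InjOn (fun p : F × F => p.1 / p.2) ↑t.offDiag := by
    rw [← Finset.card_image_iff, hcardimg, Finset.offDiag_card, htcard]
  -- main argument
  intro j₁ hj₁ j₂ hj₂ W hW hW1 hW2
  -- get two distinct nonzero elements of W
  obtain ⟨b⟩ : Nonempty (Module.Basis (Fin 2) (ZMod 2) W) := by
    have : FiniteDimensional (ZMod 2) W := Module.finite_of_finrank_pos (by omega)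
    exact ⟨(Module.finBasis (ZMod 2) W).reindex (finCongr (by rw [hW]))⟩
  set x : F := ((b 0 : W) : F) with hx
  set y : F := ((b 1 : W) : F) with hy
  have hxW : x ∈ (W : Set F) := (b 0).2
  have hyW : y ∈ (W : Set F) := (b 1).2
  have hx0 : x ≠ 0 := by
    simpa [hx] using fun h => b.ne_zero 0 (Subtype.ext h)
  have hy0 : y ≠ 0 := by
    simpa [hy] using fun h => b.ne_zero 1 (Subtype.ext h)
  have hxy : x ≠ y := by
    intro h
    exact absurd (b.injective (Subtype.ext h)) (by decide)
  -- unpack membership in shifts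
  obtain ⟨a, ha, hax⟩ := hW1 hxW
  obtain ⟨b', hb', hbx⟩ := hW1 hyW
  obtain ⟨c, hc, hcx⟩ := hW2 hxW
  obtain ⟨d, hd, hdx⟩ := hW2 hyW
  dsimp only at hax hbx hcx hdx
  have hα1 : (α : F) ^ j₁ ≠ 0 := pow_ne_zero _ (Units.ne_zero α)
  have hα2 : (α : F) ^ j₂ ≠ 0 := pow_ne_zero _ (Units.ne_zero α)
  have ha0 : a ≠ 0 := fun h => hx0 (by rw [← hax, h, mul_zero])
  have hb0 : b' ≠ 0 := fun h => hy0 (by rw [← hbx, h, mul_zero])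
  have hc0 : c ≠ 0 := fun h => hx0 (by rw [← hcx, h, mul_zero])
  have hd0 : d ≠ 0 := fun h => hy0 (by rw [← hdx, h, mul_zero])
  have hab : a ≠ b' := fun h => hxy (by rw [← hax, ← hbx, h])
  have hcd : c ≠ d := fun h => hxy (by rw [← hcx, ← hdx, h])
  have hmem1 : (a, b') ∈ (↑t.offDiag : Set (F × F)) := by
    simp only [Finset.mem_coe, Finset.mem_offDiag, ht, Set.Finite.mem_toFinset, hs,
      Set.mem_diff, Set.mem_singleton_iff, SetLike.mem_coe]
    exact ⟨⟨ha, ha0⟩, ⟨hb', hb0⟩, hab⟩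
  have hmem2 : (c, d) ∈ (↑t.offDiag : Set (F × F)) := by
    simp only [Finset.mem_coe, Finset.mem_offDiag, ht, Set.Finite.mem_toFinset, hs,
      Set.mem_diff, Set.mem_singleton_iff, SetLike.mem_coe]
    exact ⟨⟨hc, hc0⟩, ⟨hd, hd0⟩, hcd⟩
  have hratio : a / b' = c / d := by
    have h1 : a / b' = x / y := by
      rw [← hax, ← hbx, mul_div_mul_left _ _ hα1]
    have h2 : c / d = x / y := by
      rw [← hcx, ← hdx, mul_div_mul_left _ _ hα2]
    rw [h1, h2]
  have hac : a = c := by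
    have := hinj hmem1 hmem2 hratio
    exact (Prod.ext_iff.mp this).1
  -- conclude powers equal
  have hpow : (α : F) ^ j₁ = (α : F) ^ j₂ := by
    have h1 : (α : F) ^ j₁ * a = (α : F) ^ j₂ * a := by rw [hax, hac, hcx]
    exact mul_right_cancel₀ ha0 h1
  have hpowu : α ^ j₁ = α ^ j₂ := Units.ext (by simpa using hpow)
  have hmod : j₁ ≡ j₂ [MOD 2 ^ n - 1] := by
    rw [← hα]; exact (pow_eq_pow_iff_modEq).mp hpowu
  have h2n : 2 ≤ 2 ^ n := Nat.one_lt_two_pow_iff.mpr (by omega)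
  exact Nat.ModEq.eq_of_lt_of_lt hmod (by omega) (by omega)
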